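/- For every integer k ≥ 1, P^2_{[−k+1,k]} = { (x_1, x_2) ∈ ℝ^2 : ∃ (z_1, z_2) ∈ P^2_{[1,k]} with z_2 − z_1 = x_2 − x_1 and 2 − 3z_1 + z_2 ≤ x_1 + x_2 ≤ z_1 + z_2 }. -/

import Mathlib

noncomputable def cyclic (d : ℕ) (t₁ t₂ : ℤ) : Set (Fin d → ℝ) :=
  convexHull ℝ { x | ∃ i : ℤ, t₁ ≤ i ∧ i ≤ t₂ ∧ x = fun u : Fin d => (i : ℝ) ^ ((u : ℕ) + 1) }

/-- The affine reflection sending the parabola point for `i` to the point for `1 - i`. -/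
noncomputable def rhoMap : (Fin 2 → ℝ) →ᵃ[ℝ] (Fin 2 → ℝ) where
  toFun z := ![1 - z 0, 1 - 2 * z 0 + z 1]
  linear :=
    { toFun := fun z => ![-z 0, -2 * z 0 + z 1]
      map_add' := by intro p q; funext u; fin_cases u <;> simp <;> ring
      map_smul' := by intro c p; funext u; fin_cases u <;> simp <;> ring }
  map_vadd' := by
    intro p v
    funext u
    fin_cases u <;> simp [vadd_eq_add] <;> ring

theorem cyclic_two_dim_ef_odd (k : ℤ) (hk : 1 ≤ k) :
    cyclic 2 (-k + 1) k =
      { x : Fin 2 → ℝ | ∃ z : Fin 2 → ℝ, z ∈ cyclic 2 1 k ∧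
        z 1 - z 0 = x 1 - x 0 ∧
        2 - 3 * z 0 + z 1 ≤ x 0 + x 1 ∧ x 0 + x 1 ≤ z 0 + z 1 } := by
  apply le_antisymm
  · -- ⊆ : the RHS is a convex set containing all generators
    apply convexHull_min
    · rintro x ⟨i, hi1, hi2, rfl⟩
      by_cases hge : 1 ≤ i
      · refine ⟨fun u : Fin 2 => (i : ℝ) ^ ((u : ℕ) + 1), ?_, ?_, ?_, ?_⟩
        · exact subset_convexHull ℝ _ ⟨i, hge, hi2, rfl⟩
        · rfl
        · have : (1 : ℝ) ≤ (i : ℝ) := by exact_mod_cast hge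
          simp only [Fin.isValue, Fin.val_zero, Fin.val_one]
          norm_num
          linarith
        · rfl
      · push_neg at hge
        have hle : i ≤ 0 := by omega
        refine ⟨fun u : Fin 2 => ((1 - i : ℤ) : ℝ) ^ ((u : ℕ) + 1), ?_, ?_, ?_, ?_⟩
        · exact subset_convexHull ℝ _ ⟨1 - i, by omega, by omega, rfl⟩
        · simp only [Fin.isValue, Fin.val_zero, Fin.val_one]
          push_cast
          ring
        · simp only [Fin.isValue, Fin.val_zero, Fin.val_one]
          push_cast
          ring_nf
          nlinarith [(by exact_mod_cast hle : (i : ℝ) ≤ 0)]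
        · have : (i : ℝ) ≤ 0 := by exact_mod_cast hle
          simp only [Fin.isValue, Fin.val_zero, Fin.val_one]
          push_cast
          nlinarith
    · rintro x ⟨zx, hzx, e1x, e2x, e3x⟩ y ⟨zy, hzy, e1y, e2y, e3y⟩ a b ha hb hab
      refine ⟨a • zx + b • zy, (convex_convexHull ℝ _) hzx hzy ha hb hab, ?_, ?_, ?_⟩
      · simp only [Pi.add_apply, Pi.smul_apply, smul_eq_mul]
        linear_combination a * e1x + b * e1y
      · simp only [Pi.add_apply, Pi.smul_apply, smul_eq_mul]
        nlinarith [mul_le_mul_of_nonneg_left e2x ha, mul_le_mul_of_nonneg_left e2y hb]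
      · simp only [Pi.add_apply, Pi.smul_apply, smul_eq_mul]
        nlinarith [mul_le_mul_of_nonneg_left e3x ha, mul_le_mul_of_nonneg_left e3y hb]
  · -- ⊇ : x lies on the segment between z and ρ z, both in the big hull
    rintro x ⟨z, hz, e1, e2, e3⟩
    -- z has first coordinate ≥ 1
    have hz0 : (1 : ℝ) ≤ z 0 := by
      have hsub : cyclic 2 1 k ⊆ {w : Fin 2 → ℝ | 1 ≤ w 0} := by
        apply convexHull_min
        · rintro w ⟨i, hi1, hi2, rfl⟩
          simp only [Set.mem_setOf_eq, Fin.val_zero]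
          norm_num
          exact_mod_cast hi1
        · exact convex_halfSpace_ge (LinearMap.isLinear (LinearMap.proj 0)) 1
      exact hsub hz
    -- z belongs to the big hull
    have hzbig : z ∈ cyclic 2 (-k + 1) k := by
      refine convexHull_mono ?_ hz
      rintro w ⟨i, hi1, hi2, rfl⟩
      exact ⟨i, by omega, hi2, rfl⟩
    -- ρ z belongs to the big hull
    have hrho : rhoMap z ∈ cyclic 2 (-k + 1) k := by
      have himg : rhoMap z ∈ (rhoMap : (Fin 2 → ℝ) →ᵃ[ℝ] (Fin 2 → ℝ)) '' cyclic 2 1 k :=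
        ⟨z, hz, rfl⟩
      rw [cyclic, AffineMap.image_convexHull] at himg
      refine convexHull_mono ?_ himg
      rintro w ⟨v, ⟨i, hi1, hi2, rfl⟩, rfl⟩
      refine ⟨1 - i, by omega, by omega, ?_⟩
      funext u
      fin_cases u <;>
        simp [rhoMap] <;> push_cast <;> ring
    -- x is a convex combination of z and ρ z
    have hden : (0 : ℝ) < 4 * z 0 - 2 := by linarith
    set t : ℝ := (x 0 + x 1 - (2 - 3 * z 0 + z 1)) / (4 * z 0 - 2) with ht
    have ht0 : 0 ≤ t := div_nonneg (by linarith) (le_of_lt hden)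
    have ht1 : t ≤ 1 := by
      rw [div_le_one hden]
      linarith
    have hd : (4 : ℝ) * z 0 - 2 ≠ 0 := ne_of_gt hden
    have h0 : x 0 = t * z 0 + (1 - t) * (1 - z 0) := by
      have htd : t * (4 * z 0 - 2) = x 0 + x 1 - (2 - 3 * z 0 + z 1) := by
        rw [ht]; exact div_mul_cancel₀ _ hd
      linear_combination (1 / 2 : ℝ) * e1 - (1 / 2 : ℝ) * htd
    have h1 : x 1 = t * z 1 + (1 - t) * (1 - 2 * z 0 + z 1) := by
      have htd : t * (4 * z 0 - 2) = x 0 + x 1 - (2 - 3 * z 0 + z 1) := by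
        rw [ht]; exact div_mul_cancel₀ _ hd
      linear_combination -(1 / 2 : ℝ) * e1 - (1 / 2 : ℝ) * htd
    have hx : x = t • z + (1 - t) • rhoMap z := by
      funext u
      fin_cases u
      · simpa [rhoMap] using h0
      · simpa [rhoMap] using h1
    rw [hx]
    exact (convex_convexHull ℝ _) hzbig hrho ht0 (by linarith) (by ring)
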